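/- Let V : ℝ → ℝ be continuous concave on [0, ∞), and consider the Bellman operator (T V)(w) = max_{b ∈ [0, max(w − c, 0)]} [ U(G(w − b)) + e^{−δ} Σ_i q_i V(r_i + b) ], where U, G are continuous, increasing, concave, δ ≥ 0, c ≥ 0, r_i ≥ 0, q_i ≥ 0 with Σ q_i = 1. Then T V is nondecreasing in w, and if U, G have derivatives bounded by M_U, M_G respectively and V satisfies V(y) − V(x) ≤ M_U M_G (y − x) for x ≤ y, then T V also satisfies (T V)(y) − (T V)(x) ≤ M_U M_G (y − x) for x ≤ y. -/
import Mathlib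


private lemma deriv_nonneg_of_mono {f : ℝ → ℝ} (hf : Differentiable ℝ f)
    (hm : Monotone f) (x : ℝ) : 0 ≤ deriv f x := by
  have h := (hf x).hasDerivAt
  rw [hasDerivAt_iff_tendsto_slope] at h
  have h2 : Filter.Tendsto (slope f x) (nhdsWithin x (Set.Ioi x)) (nhds (deriv f x)) :=
    h.mono_left (nhdsWithin_mono x (fun y hy => ne_of_gt hy))
  refine ge_of_tendsto h2 ?_
  filter_upwards [self_mem_nhdsWithin] with y hy
  have hxy : x < y := hy
  rw [slope_def_field]
  have : f x ≤ f y := hm hxy.le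
  exact div_nonneg (by linarith) (by linarith)

private lemma lip_of_deriv_le {f : ℝ → ℝ} (hf : Differentiable ℝ f) {M : ℝ}
    (hM : ∀ x, deriv f x ≤ M) {s t : ℝ} (h : s ≤ t) : f t - f s ≤ M * (t - s) := by
  have hg : Monotone (fun x => M * x - f x) := by
    apply monotone_of_deriv_nonneg
    · exact (differentiable_id.const_mul M).sub hf
    · intro x
      have h1 : HasDerivAt (fun x => M * x - f x) (M * 1 - deriv f x) x :=
        ((hasDerivAt_id x).const_mul M).sub (hf x).hasDerivAt
      rw [h1.deriv]
      have := hM x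
      linarith
  have := hg h
  simp only at this
  linarith

/-- the single-agent banking Bellman operator
`(T V) w = max_{b ∈ [0, max (w - c) 0]} [U (G (w - b)) + e^{-δ} Σ_i q_i V (r_i + b)]`
is monotone in `w`, and preserves the one-sided Lipschitz constant
`M_U * M_G` of the value function. -/
theorem stmt16 {m : ℕ} (U G V : ℝ → ℝ)
    (hUc : Continuous U) (hGc : Continuous G)
    (hUmono : Monotone U) (hGmono : Monotone G)
    (hUconc : ConcaveOn ℝ Set.univ U) (hGconc : ConcaveOn ℝ Set.univ G)
    (hVc : Continuous V) (hVconc : ConcaveOn ℝ (Set.Ici 0) V)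
    (δ c : ℝ) (hδ : 0 ≤ δ) (hc : 0 ≤ c)
    (r q : Fin m → ℝ) (hr : ∀ i, 0 ≤ r i) (hq : ∀ i, 0 ≤ q i)
    (hq1 : ∑ i, q i = 1)
    (TV : ℝ → ℝ)
    (hTV : ∀ w : ℝ, IsGreatest
      ((fun b => U (G (w - b)) + Real.exp (-δ) * ∑ i, q i * V (r i + b)) ''
        Set.Icc 0 (max (w - c) 0)) (TV w)) :
    Monotone TV ∧
    ∀ M_U M_G : ℝ,
      Differentiable ℝ U → Differentiable ℝ G →
      (∀ x, deriv U x ≤ M_U) → (∀ x, deriv G x ≤ M_G) →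
      (∀ x y : ℝ, x ≤ y → V y - V x ≤ M_U * M_G * (y - x)) →
      ∀ x y : ℝ, x ≤ y → TV y - TV x ≤ M_U * M_G * (y - x) := by
  constructor
  · -- Monotone
    intro x y hxy
    obtain ⟨b, hb, hbe⟩ := (hTV x).1
    have hb' : b ∈ Set.Icc 0 (max (y - c) 0) := by
      refine ⟨hb.1, le_trans hb.2 ?_⟩
      exact max_le_max (by linarith) le_rfl
    have h2 := (hTV y).2 (Set.mem_image_of_mem _ hb')
    have h3 : U (G (x - b)) ≤ U (G (y - b)) := hUmono (hGmono (by linarith))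
    simp only at h2 hbe
    linarith [hbe, h2]
  · intro M_U M_G hU hG hdU hdG hV x y hxy
    have hMU : 0 ≤ M_U := le_trans (deriv_nonneg_of_mono hU hUmono 0) (hdU 0)
    have hMG : 0 ≤ M_G := le_trans (deriv_nonneg_of_mono hG hGmono 0) (hdG 0)
    have hM : 0 ≤ M_U * M_G := mul_nonneg hMU hMG
    -- composite one-sided Lipschitz
    have hUG : ∀ s t : ℝ, s ≤ t → U (G t) - U (G s) ≤ M_U * M_G * (t - s) := by
      intro s t h
      have hG1 : G t - G s ≤ M_G * (t - s) := lip_of_deriv_le hG hdG h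
      have hU1 : U (G t) - U (G s) ≤ M_U * (G t - G s) :=
        lip_of_deriv_le hU hdU (hGmono h)
      calc U (G t) - U (G s) ≤ M_U * (G t - G s) := hU1
        _ ≤ M_U * (M_G * (t - s)) := mul_le_mul_of_nonneg_left hG1 hMU
        _ = M_U * M_G * (t - s) := by ring
    obtain ⟨by_, hby, hbye⟩ := (hTV y).1
    set bx := min by_ (max (x - c) 0) with hbx_def
    have hbx : bx ∈ Set.Icc 0 (max (x - c) 0) :=
      ⟨le_min hby.1 (le_max_right _ _), min_le_right _ _⟩
    have hbxy : bx ≤ by_ := min_le_left _ _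
    -- key: x - bx ≤ y - by_
    have hkey : x - bx ≤ y - by_ := by
      rcases le_or_gt by_ (max (x - c) 0) with h | h
      · have : bx = by_ := min_eq_left h
        rw [this]; linarith
      · have hbx2 : bx = max (x - c) 0 := min_eq_right h.le
        have hby2 := hby.2
        rcases le_or_gt y c with hy | hy
        · have : max (y - c) 0 = 0 := max_eq_right (by linarith)
          rw [this] at hby2
          have : by_ = 0 := le_antisymm hby2 hby.1
          rw [this] at h
          exact absurd (le_max_right (x - c) 0) (not_le.mpr h)
        · have : max (y - c) 0 = y - c := max_eq_left (by linarith)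
          rw [this] at hby2
          have hx1 : x - c ≤ max (x - c) 0 := le_max_left _ _
          rw [hbx2]; linarith
    have hTVx := (hTV x).2 (Set.mem_image_of_mem _ hbx)
    simp only at hTVx hbye
    -- bound the V sum
    have hsum : (∑ i, q i * V (r i + by_)) - (∑ i, q i * V (r i + bx)) ≤
        M_U * M_G * (by_ - bx) := by
      rw [← Finset.sum_sub_distrib]
      calc (∑ i, (q i * V (r i + by_) - q i * V (r i + bx)))
          ≤ ∑ i : Fin m, q i * (M_U * M_G * (by_ - bx)) := by
            apply Finset.sum_le_sum
            intro i _
            have h1 := hV (r i + bx) (r i + by_) (by linarith)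
            have h2 : V (r i + by_) - V (r i + bx) ≤ M_U * M_G * (by_ - bx) := by
              calc V (r i + by_) - V (r i + bx) ≤ M_U * M_G * ((r i + by_) - (r i + bx)) := h1
                _ = M_U * M_G * (by_ - bx) := by ring
            calc q i * V (r i + by_) - q i * V (r i + bx)
                = q i * (V (r i + by_) - V (r i + bx)) := by ring
              _ ≤ q i * (M_U * M_G * (by_ - bx)) := mul_le_mul_of_nonneg_left h2 (hq i)
        _ = (∑ i, q i) * (M_U * M_G * (by_ - bx)) := by rw [← Finset.sum_mul]
        _ = M_U * M_G * (by_ - bx) := by rw [hq1]; ring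
    have hexp0 : (0:ℝ) ≤ Real.exp (-δ) := (Real.exp_pos _).le
    have hexp1 : Real.exp (-δ) ≤ 1 := Real.exp_le_one_iff.mpr (by linarith)
    have hVterm : Real.exp (-δ) * (∑ i, q i * V (r i + by_)) -
        Real.exp (-δ) * (∑ i, q i * V (r i + bx)) ≤ M_U * M_G * (by_ - bx) := by
      have h1 : Real.exp (-δ) * ((∑ i, q i * V (r i + by_)) - (∑ i, q i * V (r i + bx)))
          ≤ Real.exp (-δ) * (M_U * M_G * (by_ - bx)) :=
        mul_le_mul_of_nonneg_left hsum hexp0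
      have h2 : Real.exp (-δ) * (M_U * M_G * (by_ - bx)) ≤ 1 * (M_U * M_G * (by_ - bx)) :=
        mul_le_mul_of_nonneg_right hexp1 (mul_nonneg hM (by linarith))
      nlinarith
    have hUterm : U (G (y - by_)) - U (G (x - bx)) ≤ M_U * M_G * ((y - by_) - (x - bx)) :=
      hUG _ _ hkey
    have : TV y - TV x ≤ (U (G (y - by_)) + Real.exp (-δ) * ∑ i, q i * V (r i + by_)) -
        (U (G (x - bx)) + Real.exp (-δ) * ∑ i, q i * V (r i + bx)) := by linarith
    calc TV y - TV x ≤ _ := this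
      _ ≤ M_U * M_G * ((y - by_) - (x - bx)) + M_U * M_G * (by_ - bx) := by linarith
      _ = M_U * M_G * (y - x) := by ring
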